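/- Let (A, U) be a concrete category over C such that the right Kan extension Ran_U U = (M, ε) exists. Then for every endofunctor F on C and every concrete functor J : A ⥤ Alg F (i.e., U_F ∘ J = U), the right Kan extension Ran_U J exists; moreover it is preserved by the forgetful functor U_F : Alg F ⥤ C and by every concrete functor T : Alg F ⥤ Alg G for any endofunctor G on C. -/

import Mathlib

open CategoryTheory

namespace Stmt15Aux

open Endofunctor

variable {A : Type*} [Category A] {C : Type*} [Category C]

/-- The "structure" natural transformation of a functor into algebras. -/
@[simps]
def strNat {B : Type*} [Category B] {G : C ⥤ C} (X : B ⥤ Algebra G) :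
    (X ⋙ Algebra.forget G) ⋙ G ⟶ X ⋙ Algebra.forget G where
  app b := (X.obj b).str
  naturality _ _ f := (X.map f).h

/-- The forgetful functor reflects right Kan extensions. -/
theorem reflect {G : C ⥤ C} (U : A ⥤ C) (K : A ⥤ Algebra G)
    (V : C ⥤ Algebra G) (ζ : U ⋙ V ⟶ K)
    [h : (V ⋙ Algebra.forget G).IsRightKanExtension
        ((Functor.associator U V (Algebra.forget G)).inv ≫ Functor.whiskerRight ζ (Algebra.forget G))] :
    V.IsRightKanExtension ζ := by
  set α : U ⋙ (V ⋙ Algebra.forget G) ⟶ K ⋙ Algebra.forget G :=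
    (Functor.associator U V (Algebra.forget G)).inv ≫ Functor.whiskerRight ζ (Algebra.forget G) with hα
  have lift : ∀ (X : C ⥤ Algebra G) (φ : U ⋙ X ⟶ K),
      { τ : X ⟶ V // Functor.whiskerLeft U τ ≫ ζ = φ } := by
    intro X φ
    set φ' : U ⋙ (X ⋙ Algebra.forget G) ⟶ K ⋙ Algebra.forget G :=
      (Functor.associator U X (Algebra.forget G)).inv ≫ Functor.whiskerRight φ (Algebra.forget G)
      with hφ'
    set τ := (V ⋙ Algebra.forget G).liftOfIsRightKanExtension α (X ⋙ Algebra.forget G) φ'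
      with hτ
    have fac : ∀ a, τ.app (U.obj a) ≫ (ζ.app a).f = (φ.app a).f := by
      intro a
      have := (V ⋙ Algebra.forget G).liftOfIsRightKanExtension_fac_app α
        (X ⋙ Algebra.forget G) φ' a
      have e1 : α.app a = (ζ.app a).f := Category.id_comp _
      have e2 : φ'.app a = (φ.app a).f := Category.id_comp _
      exact (congrArg (τ.app (U.obj a) ≫ ·) e1).symm.trans (this.trans e2)
    have key : Functor.whiskerRight τ G ≫ strNat V = strNat X ≫ τ := by
      apply (V ⋙ Algebra.forget G).hom_ext_of_isRightKanExtension α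
      ext a
      have e1 : α.app a = (ζ.app a).f := Category.id_comp _
      show (G.map (τ.app (U.obj a)) ≫ (V.obj (U.obj a)).str) ≫ α.app a =
        ((X.obj (U.obj a)).str ≫ τ.app (U.obj a)) ≫ α.app a
      rw [e1]
      refine (Category.assoc _ _ _).trans (Eq.trans ?_ (Category.assoc _ _ _).symm)
      exact (congrArg (G.map (τ.app (U.obj a)) ≫ ·) (ζ.app a).h.symm).trans
        ((G.map_comp_assoc _ _ _).symm.trans
        ((congrArg (fun g => G.map g ≫ (K.obj a).str) (fac a)).trans
        ((φ.app a).h.trans (congrArg (_ ≫ ·) (fac a).symm))))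
    have hcomp : ∀ c, G.map (τ.app c) ≫ (V.obj c).str = (X.obj c).str ≫ τ.app c := by
      intro c
      have := NatTrans.congr_app key c
      simp at this
      exact this
    refine ⟨{ app := fun c => ⟨τ.app c, hcomp c⟩, naturality := ?_ }, ?_⟩
    · intro c c' f
      ext
      have := τ.naturality f
      simp at this
      exact this
    · ext a
      · exact fac a
  have uniq : ∀ {X : C ⥤ Algebra G} (γ₁ γ₂ : X ⟶ V),
      Functor.whiskerLeft U γ₁ ≫ ζ = Functor.whiskerLeft U γ₂ ≫ ζ → γ₁ = γ₂ := by
    intro X γ₁ γ₂ hγ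
    have h2 : Functor.whiskerRight γ₁ (Algebra.forget G) = Functor.whiskerRight γ₂ (Algebra.forget G) := by
      apply (V ⋙ Algebra.forget G).hom_ext_of_isRightKanExtension α
      ext a
      have := congrArg Algebra.Hom.f (NatTrans.congr_app hγ a)
      simp [hα] at this
      have e1 : α.app a = (ζ.app a).f := Category.id_comp _
      show _ ≫ α.app a = _ ≫ α.app a
      rw [e1]
      exact this
    ext c
    · have := NatTrans.congr_app h2 c
      simp at this
      exact this
  exact ⟨⟨Limits.IsTerminal.ofUniqueHom
    (fun X => CostructuredArrow.homMk (lift X.left X.hom).1 (lift X.left X.hom).2)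
    (fun X m => by
      apply CostructuredArrow.hom_ext
      exact uniq _ _ ((CostructuredArrow.w m).trans (lift X.left X.hom).2.symm))⟩⟩

variable (M : C ⥤ C) {F : C ⥤ C} (J : A ⥤ Algebra F)
variable (ε : (J ⋙ Algebra.forget F) ⋙ M ⟶ J ⋙ Algebra.forget F) [M.IsRightKanExtension ε]

/-- The algebra structure on `M`. -/
noncomputable def σ : M ⋙ F ⟶ M :=
  M.liftOfIsRightKanExtension ε (M ⋙ F)
    ((Functor.associator _ M F).inv ≫ Functor.whiskerRight ε F ≫ strNat J)

lemma facσ (a : A) : (σ M J ε).app ((J ⋙ Algebra.forget F).obj a) ≫ ε.app a =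
    F.map (ε.app a) ≫ (J.obj a).str := by
  have := M.liftOfIsRightKanExtension_fac_app ε (M ⋙ F)
    ((Functor.associator _ M F).inv ≫ Functor.whiskerRight ε F ≫ strNat J) a
  simp at this
  exact this

/-- The lift of `M` to algebras. -/
@[simps]
noncomputable def V : C ⥤ Algebra F where
  obj c := ⟨M.obj c, (σ M J ε).app c⟩
  map f := ⟨M.map f, (σ M J ε).naturality f⟩
  map_id c := by ext; simp
  map_comp f g := by ext; simp

/-- The lift of `ε`. -/
@[simps]
noncomputable def ζ : (J ⋙ Algebra.forget F) ⋙ V M J ε ⟶ J where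
  app a := ⟨ε.app a, (facσ M J ε a).symm⟩
  naturality a a' f := by ext; have := ε.naturality f; simp at this; exact this

end Stmt15Aux


/-- Let `(A, U)` be a concrete category over `C` such that `Ran_U U = (M, ε)` exists. Then for
every endofunctor `F` on `C` and every concrete functor `J : A ⥤ Alg F`, the right Kan
extension `Ran_U J` exists; moreover it is preserved by the forgetful functor
`U_F : Alg F ⥤ C` and by every concrete functor `T : Alg F ⥤ Alg G`. -/
theorem stmt15 {A : Type*} [Category A] {C : Type*} [Category C]
    (U : A ⥤ C) [U.Faithful] (M : C ⥤ C) (ε : U ⋙ M ⟶ U) [M.IsRightKanExtension ε]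
    (F : C ⥤ C) (J : A ⥤ Endofunctor.Algebra F)
    (hJ : J ⋙ Endofunctor.Algebra.forget F = U) :
    ∃ (V : C ⥤ Endofunctor.Algebra F) (ζ : U ⋙ V ⟶ J),
      V.IsRightKanExtension ζ ∧
      (V ⋙ Endofunctor.Algebra.forget F).IsRightKanExtension
        ((Functor.associator U V (Endofunctor.Algebra.forget F)).inv ≫
          CategoryTheory.Functor.whiskerRight ζ (Endofunctor.Algebra.forget F)) ∧
      (∀ (G : C ⥤ C) (T : Endofunctor.Algebra F ⥤ Endofunctor.Algebra G),
        T ⋙ Endofunctor.Algebra.forget G = Endofunctor.Algebra.forget F →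
        (V ⋙ T).IsRightKanExtension
          ((Functor.associator U V T).inv ≫ CategoryTheory.Functor.whiskerRight ζ T)) := by
  subst hJ
  set V := Stmt15Aux.V M J ε with hV
  set ζ := Stmt15Aux.ζ M J ε with hζ
  have h2 : (V ⋙ Endofunctor.Algebra.forget F).IsRightKanExtension
      ((Functor.associator _ V (Endofunctor.Algebra.forget F)).inv ≫
        Functor.whiskerRight ζ (Endofunctor.Algebra.forget F)) := by
    refine Functor.isRightKanExtension_of_iso
      (NatIso.ofComponents (fun c => Iso.refl _)
        (by intro X Y f; exact (Category.comp_id (M.map f)).trans (Category.id_comp _).symm) :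
        M ≅ V ⋙ Endofunctor.Algebra.forget F) ε _ ?_
    ext a
    simp [hζ]
    exact (Category.id_comp _).trans (Category.id_comp _)
  haveI := h2
  have h1 := Stmt15Aux.reflect _ J V ζ
  refine ⟨V, ζ, h1, h2, ?_⟩
  intro G T hT
  haveI h3 : ((V ⋙ T) ⋙ Endofunctor.Algebra.forget G).IsRightKanExtension
      ((Functor.associator _ (V ⋙ T) (Endofunctor.Algebra.forget G)).inv ≫
        Functor.whiskerRight ((Functor.associator _ V T).inv ≫ Functor.whiskerRight ζ T)
          (Endofunctor.Algebra.forget G)) := by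
    refine (Functor.isRightKanExtension_iff_of_iso₂ ε _
      (NatIso.ofComponents (fun a => eqToIso (show (J ⋙ Endofunctor.Algebra.forget F).obj a =
        ((J ⋙ T) ⋙ Endofunctor.Algebra.forget G).obj a from
        (Functor.congr_obj hT (J.obj a)).symm)) ?_)
      (NatIso.ofComponents (fun c => eqToIso (show M.obj c =
        ((V ⋙ T) ⋙ Endofunctor.Algebra.forget G).obj c from
        (Functor.congr_obj hT (V.obj c)).symm)) ?_)
      ?_).1 inferInstance
    · intro a a' f
      have h4 := Functor.congr_hom hT (J.map f)
      simp only [Functor.comp_map, Endofunctor.Algebra.forget_map] at h4 ⊢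
      rw [h4]
      simp
    · intro c c' f
      have h4 := Functor.congr_hom hT (V.map f)
      simp only [Functor.comp_map, Endofunctor.Algebra.forget_map] at h4 ⊢
      rw [h4]
      simp
      erw [eqToHom_refl, Category.id_comp]
      rfl
    · ext a
      have h4 := Functor.congr_hom hT (ζ.app a)
      simp only [Functor.comp_map, Endofunctor.Algebra.forget_map] at h4
      simp only [NatTrans.comp_app, Functor.whiskerLeft_app, Functor.whiskerRight_app, Functor.comp_obj,
        Functor.associator_inv_app, Category.id_comp, NatIso.ofComponents_hom_app,
        eqToIso.hom, Endofunctor.Algebra.forget_map]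
      rw [h4]
      simp [hζ]
      erw [eqToHom_refl, Category.id_comp]
      rfl
  exact Stmt15Aux.reflect _ (J ⋙ T) (V ⋙ T) _
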